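/- arXiv:1804.07298 — 2 statements merged into one kernel-verified Lean document; each statement's English description precedes it below -/
import Mathlib

section
/- Let λ, μ, α, β, γc, ε be real numbers with μ > 0, α > 0, γc > 0, ε > 0, 3λ+2μ > 0 and 3β+2γc > 0. If 3×3 real matrices γ and χ satisfy W(γ,χ) = 0, where W is the Cosserat strain energy density, then γ = 0 and χ = 0; that is, under these strict parameter inequalities W is a positive definite quadratic form. -/
open Matrix BigOperators

/-- The Cosserat strain energy density. -/
noncomputable def cosseratW (mu al lam gc ep be : ℝ) (γ χ : Matrix (Fin 3) (Fin 3) ℝ) : ℝ :=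
  ((mu + al) / 2) * ∑ i, ∑ j, γ i j * γ i j
    + ((mu - al) / 2) * ∑ i, ∑ j, γ i j * γ j i
    + (lam / 2) * γ.trace ^ 2
    + ((gc + ep) / 2) * ∑ i, ∑ j, χ i j * χ i j
    + ((gc - ep) / 2) * ∑ i, ∑ j, χ i j * χ j i
    + (be / 2) * χ.trace ^ 2

private noncomputable def cosQ (mu al lam : ℝ) (g : Matrix (Fin 3) (Fin 3) ℝ) : ℝ :=
  ((mu + al) / 2) * ∑ i, ∑ j, g i j * g i j
    + ((mu - al) / 2) * ∑ i, ∑ j, g i j * g j i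
    + (lam / 2) * g.trace ^ 2

private lemma cosQ_sos (mu al lam : ℝ) (g : Matrix (Fin 3) (Fin 3) ℝ) :
    cosQ mu al lam g =
      (mu / 2) * ((g 0 1 + g 1 0) ^ 2 + (g 0 2 + g 2 0) ^ 2 + (g 1 2 + g 2 1) ^ 2)
      + (al / 2) * ((g 0 1 - g 1 0) ^ 2 + (g 0 2 - g 2 0) ^ 2 + (g 1 2 - g 2 1) ^ 2)
      + (mu / 3) * ((g 0 0 - g 1 1) ^ 2 + (g 1 1 - g 2 2) ^ 2 + (g 2 2 - g 0 0) ^ 2)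
      + ((3 * lam + 2 * mu) / 6) * (g 0 0 + g 1 1 + g 2 2) ^ 2 := by
  simp only [cosQ, Matrix.trace, Matrix.diag, Fin.sum_univ_three]
  ring

private lemma aux_zero (mu al lam A B C D : ℝ) (hmu : 0 < mu) (hal : 0 < al)
    (hlm : 0 < 3 * lam + 2 * mu) (hA : 0 ≤ A) (hB : 0 ≤ B) (hC : 0 ≤ C) (hD : 0 ≤ D)
    (h : (mu / 2) * A + (al / 2) * B + (mu / 3) * C + ((3 * lam + 2 * mu) / 6) * D = 0) :
    A = 0 ∧ B = 0 ∧ C = 0 ∧ D = 0 := by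
  have p1 := mul_nonneg hmu.le hA
  have p2 := mul_nonneg hal.le hB
  have p3 := mul_nonneg hmu.le hC
  have p4 := mul_nonneg hlm.le hD
  have qA : mu * A ≤ 0 := by linarith
  have qB : al * B ≤ 0 := by linarith
  have qC : mu * C ≤ 0 := by linarith
  have qD : (3 * lam + 2 * mu) * D ≤ 0 := by linarith
  refine ⟨le_antisymm ?_ hA, le_antisymm ?_ hB, le_antisymm ?_ hC, le_antisymm ?_ hD⟩
  · exact nonpos_of_mul_nonpos_right (by linarith) hmu
  · exact nonpos_of_mul_nonpos_right (by linarith) hal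
  · exact nonpos_of_mul_nonpos_right (by linarith) hmu
  · exact nonpos_of_mul_nonpos_right (by linarith) hlm

private lemma cosQ_nonneg (mu al lam : ℝ) (hmu : 0 < mu) (hal : 0 < al)
    (hlm : 0 < 3 * lam + 2 * mu) (g : Matrix (Fin 3) (Fin 3) ℝ) : 0 ≤ cosQ mu al lam g := by
  rw [cosQ_sos]
  have h1 := sq_nonneg (g 0 1 + g 1 0); have h2 := sq_nonneg (g 0 2 + g 2 0)
  have h3 := sq_nonneg (g 1 2 + g 2 1); have h4 := sq_nonneg (g 0 1 - g 1 0)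
  have h5 := sq_nonneg (g 0 2 - g 2 0); have h6 := sq_nonneg (g 1 2 - g 2 1)
  have h7 := sq_nonneg (g 0 0 - g 1 1); have h8 := sq_nonneg (g 1 1 - g 2 2)
  have h9 := sq_nonneg (g 2 2 - g 0 0); have h10 := sq_nonneg (g 0 0 + g 1 1 + g 2 2)
  positivity

private lemma cosQ_eq_zero (mu al lam : ℝ) (hmu : 0 < mu) (hal : 0 < al)
    (hlm : 0 < 3 * lam + 2 * mu) (g : Matrix (Fin 3) (Fin 3) ℝ)
    (h : cosQ mu al lam g = 0) : g = 0 := by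
  rw [cosQ_sos] at h
  have h1 := sq_nonneg (g 0 1 + g 1 0); have h2 := sq_nonneg (g 0 2 + g 2 0)
  have h3 := sq_nonneg (g 1 2 + g 2 1); have h4 := sq_nonneg (g 0 1 - g 1 0)
  have h5 := sq_nonneg (g 0 2 - g 2 0); have h6 := sq_nonneg (g 1 2 - g 2 1)
  have h7 := sq_nonneg (g 0 0 - g 1 1); have h8 := sq_nonneg (g 1 1 - g 2 2)
  have h9 := sq_nonneg (g 2 2 - g 0 0); have h10 := sq_nonneg (g 0 0 + g 1 1 + g 2 2)
  obtain ⟨eA, eB, eC, eD⟩ := aux_zero mu al lam _ _ _ _ hmu hal hlm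
    (by linarith) (by linarith) (by linarith) (by linarith) h
  have e1 : (g 0 1 + g 1 0) ^ 2 = 0 := by linarith
  have e2 : (g 0 2 + g 2 0) ^ 2 = 0 := by linarith
  have e3 : (g 1 2 + g 2 1) ^ 2 = 0 := by linarith
  have e4 : (g 0 1 - g 1 0) ^ 2 = 0 := by linarith
  have e5 : (g 0 2 - g 2 0) ^ 2 = 0 := by linarith
  have e6 : (g 1 2 - g 2 1) ^ 2 = 0 := by linarith
  have e7 : (g 0 0 - g 1 1) ^ 2 = 0 := by linarith
  have e8 : (g 1 1 - g 2 2) ^ 2 = 0 := by linarith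
  have e10 : (g 0 0 + g 1 1 + g 2 2) ^ 2 = 0 := eD
  rw [pow_eq_zero_iff two_ne_zero] at e1 e2 e3 e4 e5 e6 e7 e8 e10
  ext i j
  fin_cases i <;> fin_cases j <;> simp <;> linarith

theorem stmt_8 (lam mu al be gc ep : ℝ) (hmu : 0 < mu) (hal : 0 < al) (hgc : 0 < gc)
    (hep : 0 < ep) (hlm : 0 < 3 * lam + 2 * mu) (hbg : 0 < 3 * be + 2 * gc)
    (γ χ : Matrix (Fin 3) (Fin 3) ℝ)
    (h : cosseratW mu al lam gc ep be γ χ = 0) :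
    γ = 0 ∧ χ = 0 := by
  have hsplit : cosseratW mu al lam gc ep be γ χ = cosQ mu al lam γ + cosQ gc ep be χ := by
    simp only [cosseratW, cosQ]; ring
  rw [hsplit] at h
  have n1 := cosQ_nonneg mu al lam hmu hal hlm γ
  have n2 := cosQ_nonneg gc ep be hgc hep hbg χ
  exact ⟨cosQ_eq_zero mu al lam hmu hal hlm γ (by linarith),
    cosQ_eq_zero gc ep be hgc hep hbg χ (by linarith)⟩
end

section
/- Let λ, μ, α, β, γc, ε be real numbers with μ ≠ 0, α ≠ 0, γc ≠ 0, ε ≠ 0, 3λ+2μ ≠ 0 and 3β+2γc ≠ 0, and set μ' = 1/(4μ), α' = 1/(4α), γc' = 1/(4γc), ε' = 1/(4ε), λ' = −λ/(6μ(λ+2μ/3)), β' = −β/(6γc(β+2γc/3)). For all 3×3 real matrices γ and χ, if σ = (μ+α)γ + (μ−α)γᵀ + λ(tr γ)I and m = (γc+ε)χ + (γc−ε)χᵀ + β(tr χ)I, then Φ(σ,m) = W(γ,χ), where W is the Cosserat strain energy density and Φ is the Cosserat stress energy density. -/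
open Matrix BigOperators

/-- The Cosserat stress energy density (same quadratic form with primed coefficients). -/
noncomputable def cosseratPhi (mu' al' lam' gc' ep' be' : ℝ)
    (σ m : Matrix (Fin 3) (Fin 3) ℝ) : ℝ :=
  ((mu' + al') / 2) * ∑ i, ∑ j, σ i j * σ i j
    + ((mu' - al') / 2) * ∑ i, ∑ j, σ i j * σ j i
    + (lam' / 2) * σ.trace ^ 2
    + ((gc' + ep') / 2) * ∑ i, ∑ j, m i j * m i j
    + ((gc' - ep') / 2) * ∑ i, ∑ j, m i j * m j i
    + (be' / 2) * m.trace ^ 2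

set_option maxHeartbeats 2000000 in
lemma cosserat_half (mu al lam : ℝ) (hmu : mu ≠ 0) (hal : al ≠ 0)
    (hlm : 3 * lam + 2 * mu ≠ 0) (γ σ : Matrix (Fin 3) (Fin 3) ℝ)
    (hσ : σ = (mu + al) • γ + (mu - al) • γᵀ + (lam * γ.trace) • (1 : Matrix (Fin 3) (Fin 3) ℝ)) :
    ((1 / (4 * mu) + 1 / (4 * al)) / 2) * ∑ i, ∑ j, σ i j * σ i j
      + ((1 / (4 * mu) - 1 / (4 * al)) / 2) * ∑ i, ∑ j, σ i j * σ j i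
      + ((-lam / (6 * mu * (lam + 2 * mu / 3))) / 2) * σ.trace ^ 2
    = ((mu + al) / 2) * ∑ i, ∑ j, γ i j * γ i j
      + ((mu - al) / 2) * ∑ i, ∑ j, γ i j * γ j i
      + (lam / 2) * γ.trace ^ 2 := by
  subst hσ
  have h3 : 6 * mu * lam + 4 * mu ^ 2 ≠ 0 := by
    intro h; exact mul_ne_zero hmu hlm (by linear_combination h / 2)
  rw [show 6 * mu * (lam + 2 * mu / 3) = 6 * mu * lam + 4 * mu ^ 2 by ring]
  simp only [Matrix.trace, Matrix.diag, Matrix.add_apply, Matrix.smul_apply,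
    Matrix.transpose_apply, Matrix.one_apply, smul_eq_mul, Fin.sum_univ_three, Fin.isValue]
  norm_num [Fin.ext_iff]
  have h4 : lam * 6 + mu * 4 ≠ 0 := by
    intro h; exact hlm (by linear_combination h / 2)
  field_simp
  ring

theorem stmt_9 (lam mu al be gc ep : ℝ) (hmu : mu ≠ 0) (hal : al ≠ 0) (hgc : gc ≠ 0)
    (hep : ep ≠ 0) (hlm : 3 * lam + 2 * mu ≠ 0) (hbg : 3 * be + 2 * gc ≠ 0)
    (mu' al' lam' gc' ep' be' : ℝ)
    (hmu' : mu' = 1 / (4 * mu)) (hal' : al' = 1 / (4 * al))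
    (hgc' : gc' = 1 / (4 * gc)) (hep' : ep' = 1 / (4 * ep))
    (hlam' : lam' = -lam / (6 * mu * (lam + 2 * mu / 3)))
    (hbe' : be' = -be / (6 * gc * (be + 2 * gc / 3)))
    (γ χ σ m : Matrix (Fin 3) (Fin 3) ℝ)
    (hσ : σ = (mu + al) • γ + (mu - al) • γᵀ + (lam * γ.trace) • (1 : Matrix (Fin 3) (Fin 3) ℝ))
    (hm : m = (gc + ep) • χ + (gc - ep) • χᵀ + (be * χ.trace) • (1 : Matrix (Fin 3) (Fin 3) ℝ)) :
    cosseratPhi mu' al' lam' gc' ep' be' σ m = cosseratW mu al lam gc ep be γ χ := by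
  have A := cosserat_half mu al lam hmu hal hlm γ σ hσ
  have B := cosserat_half gc ep be hgc hep hbg χ m hm
  simp only [cosseratPhi, cosseratW, hmu', hal', hgc', hep', hlam', hbe']
  linarith
end
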